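/- Let U ⊆ ℂ be open with x·(x−1)·(x+8) ≠ 0 for all x ∈ U. Let Ψ : ℂ → ℂ be twice differentiable on U and satisfy x(x−1)(x+8)·Ψ''(x) + (3x²+14x−8)·Ψ'(x) + (x+2)·Ψ(x) = 0 for all x ∈ U, and let g : ℂ → ℂ be twice differentiable on U with g(x)² = x(x−1)(x+8) for all x ∈ U. Then ψ := g·Ψ solves ψ'' = Q₃·ψ on U, where Q₃(x) := −(1/4)·(x⁴+8x³+72x²−64x+64)/(x²(x−1)²(x+8)²). -/

import Mathlib

open Complex

/-- `f` solves the equation `ψ'' = Q·ψ` on the open set `U`. -/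
def SolvesOn (Q f : ℂ → ℂ) (U : Set ℂ) : Prop :=
  (∀ x ∈ U, DifferentiableAt ℂ f x) ∧ (∀ x ∈ U, DifferentiableAt ℂ (deriv f) x) ∧
    ∀ x ∈ U, deriv (deriv f) x = Q x * f x

theorem chudnovsky_three_normal_form
    (U : Set ℂ) (hU : IsOpen U)
    (hUne : ∀ x ∈ U, x * (x - 1) * (x + 8) ≠ 0)
    (Ψ g : ℂ → ℂ)
    (hΨ1 : ∀ x ∈ U, DifferentiableAt ℂ Ψ x)
    (hΨ2 : ∀ x ∈ U, DifferentiableAt ℂ (deriv Ψ) x)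
    (hode : ∀ x ∈ U, x * (x - 1) * (x + 8) * deriv (deriv Ψ) x
      + (3 * x ^ 2 + 14 * x - 8) * deriv Ψ x + (x + 2) * Ψ x = 0)
    (hg1 : ∀ x ∈ U, DifferentiableAt ℂ g x)
    (hg2 : ∀ x ∈ U, DifferentiableAt ℂ (deriv g) x)
    (hgsq : ∀ x ∈ U, g x ^ 2 = x * (x - 1) * (x + 8)) :
    SolvesOn (fun x => -(1 / 4) * (x ^ 4 + 8 * x ^ 3 + 72 * x ^ 2 - 64 * x + 64)
        / (x ^ 2 * (x - 1) ^ 2 * (x + 8) ^ 2))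
      (fun x => g x * Ψ x) U := by
  -- first derivative of the product
  have hd1 : ∀ x ∈ U, deriv (fun y => g y * Ψ y) x
      = deriv g x * Ψ x + g x * deriv Ψ x := by
    intro x hx
    exact deriv_mul (hg1 x hx) (hΨ1 x hx)
  have hdiff1 : ∀ x ∈ U, DifferentiableAt ℂ (fun y => g y * Ψ y) x := by
    intro x hx; exact (hg1 x hx).mul (hΨ1 x hx)
  have hdiffd : ∀ x ∈ U, DifferentiableAt ℂ
      (fun y => deriv g y * Ψ y + g y * deriv Ψ y) x := by
    intro x hx
    exact ((hg2 x hx).mul (hΨ1 x hx)).add ((hg1 x hx).mul (hΨ2 x hx))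
  have hev : ∀ x ∈ U, deriv (fun y => g y * Ψ y)
      =ᶠ[nhds x] (fun y => deriv g y * Ψ y + g y * deriv Ψ y) := by
    intro x hx
    exact Filter.eventuallyEq_of_mem (hU.mem_nhds hx) (fun y hy => hd1 y hy)
  have hdiff2 : ∀ x ∈ U, DifferentiableAt ℂ (deriv (fun y => g y * Ψ y)) x := by
    intro x hx
    exact (hdiffd x hx).congr_of_eventuallyEq (hev x hx)
  -- second derivative of the product
  have hd2 : ∀ x ∈ U, deriv (deriv (fun y => g y * Ψ y)) x
      = deriv (deriv g) x * Ψ x + 2 * deriv g x * deriv Ψ x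
        + g x * deriv (deriv Ψ) x := by
    intro x hx
    rw [Filter.EventuallyEq.deriv_eq (hev x hx)]
    rw [deriv_fun_add (f := fun y => deriv g y * Ψ y) (g := fun y => g y * deriv Ψ y) ((hg2 x hx).mul (hΨ1 x hx)) ((hg1 x hx).mul (hΨ2 x hx)),
      deriv_fun_mul (hg2 x hx) (hΨ1 x hx), deriv_fun_mul (hg1 x hx) (hΨ2 x hx)]
    ring
  -- First relation : 2 g g' = p'
  have he2 : ∀ x ∈ U, 2 * g x * deriv g x = 3 * x ^ 2 + 14 * x - 8 := by
    intro x hx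
    have hev2 : (fun y => g y ^ 2) =ᶠ[nhds x] (fun y => y * (y - 1) * (y + 8)) :=
      Filter.eventuallyEq_of_mem (hU.mem_nhds hx) (fun y hy => hgsq y hy)
    have h1 : deriv (fun y => g y ^ 2) x = 2 * g x * deriv g x := by
      have := ((hg1 x hx).hasDerivAt.pow 2).deriv
      simp at this; exact this
    have h2 : HasDerivAt (fun y : ℂ => y * (y - 1) * (y + 8))
        ((1 * (x - 1) + x * 1) * (x + 8) + x * (x - 1) * 1) x :=
      ((hasDerivAt_id x).mul ((hasDerivAt_id x).sub_const 1)).mul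
        ((hasDerivAt_id x).add_const 8)
    rw [← h1, hev2.deriv_eq, h2.deriv]; ring
  -- Second relation : 2 g'^2 + 2 g g'' = p''
  have he3 : ∀ x ∈ U, 2 * deriv g x ^ 2 + 2 * g x * deriv (deriv g) x
      = 6 * x + 14 := by
    intro x hx
    have hev3 : (fun y => 2 * g y * deriv g y)
        =ᶠ[nhds x] (fun y => 3 * y ^ 2 + 14 * y - 8) :=
      Filter.eventuallyEq_of_mem (hU.mem_nhds hx) (fun y hy => he2 y hy)
    have h1 : deriv (fun y => 2 * g y * deriv g y) x
        = 2 * deriv g x * deriv g x + 2 * g x * deriv (deriv g) x := by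
      have hc : DifferentiableAt ℂ (fun y => 2 * g y) x := (hg1 x hx).const_mul 2
      rw [deriv_fun_mul hc (hg2 x hx), deriv_const_mul 2 (hg1 x hx)]
    have h2 : HasDerivAt (fun y : ℂ => 3 * y ^ 2 + 14 * y - 8)
        (3 * (2 * x ^ 1) + 14 * 1) x :=
      (((hasDerivAt_pow 2 x).const_mul 3).add ((hasDerivAt_id x).const_mul 14)).sub_const 8
    have := hev3.deriv_eq
    rw [h1, h2.deriv] at this
    linear_combination this
  refine ⟨hdiff1, hdiff2, ?_⟩
  intro x hx
  have hx0 : x ≠ 0 := fun h => hUne x hx (by rw [h]; ring)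
  have hx1 : x - 1 ≠ 0 := fun h => hUne x hx (by rw [h]; ring)
  have hx8 : x + 8 ≠ 0 := fun h => hUne x hx (by rw [h]; ring)
  have hD : x ^ 2 * (x - 1) ^ 2 * (x + 8) ^ 2 ≠ 0 := mul_ne_zero (mul_ne_zero (pow_ne_zero 2 hx0) (pow_ne_zero 2 hx1)) (pow_ne_zero 2 hx8)
  rw [hd2 x hx, div_mul_eq_mul_div, eq_div_iff hD]
  have e1 := hgsq x hx
  have e2 := he2 x hx
  have e3 := he3 x hx
  have e4 := hode x hx
  linear_combination (1/4 : ℂ) * (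
    (-8 * (x * (x - 1) * (x + 8)) * deriv g x * deriv Ψ x
      - 4 * (x * (x - 1) * (x + 8)) * deriv (deriv g) x * Ψ x
      + 4 * g x * deriv g x ^ 2 * Ψ x) * e1
    + (4 * (x * (x - 1) * (x + 8)) * g x * deriv Ψ x
      - (2 * g x * deriv g x + (3 * x ^ 2 + 14 * x - 8)) * g x * Ψ x) * e2
    + (2 * (x * (x - 1) * (x + 8)) * g x * Ψ x) * e3
    + (4 * (x * (x - 1) * (x + 8)) * g x) * e4)
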